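/- Let G be a finite abelian group, K ≤ G a subgroup, and t_1,…,t_p ∈ G a complete set of representatives of the cosets of K in G. Let L : (G → ℂ^q) → (G → ℂ^r) be the multiplication operator with multipliers m_L : G → ℂ^{r×q}. For s ∈ {q, r} define the map η_s : (G → ℂ^s) → (K → ℂ^{p·s}) by ((η_s f)(x))_{(i,a)} = (f(x + t_i))_a for x ∈ K, i ∈ {1,…,p}, a ∈ {1,…,s} (η_s is a linear bijection). Define the multiplication operator G' : (K → ℂ^{p·q}) → (K → ℂ^{p·r}) with block multipliers m_{G'} : K → ℂ^{(p·r)×(p·q)} given by (m_{G'}(y))_{(i,a),(k,b)} = (m_L(y − t_i + t_k))_{a,b}. Then the diagram commutes: η_r ∘ L = G' ∘ η_q. -/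
import Mathlib

open Matrix

/-- Rewriting a multiplication operator with respect to a subgroup (sublattice):
if `t₁,…,t_p` is a complete set of coset representatives of `K ≤ G` and `L` is a
multiplication operator on `G` with multipliers `m_L`, then with
`(m_{G'}(y))_{(i,a),(k,b)} = (m_L(y − tᵢ + t_k))_{a,b}` one has `η_r ∘ L = G' ∘ η_q`,
where `(η_s f)(x)_{(i,a)} = f(x + tᵢ)_a`. -/
theorem multiplication_operator_sublattice_rewrite
    {G : Type*} [AddCommGroup G] [Fintype G] (q r p : ℕ)
    (K : AddSubgroup G) [Fintype K]
    (t : Fin p → G)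
    (htdist : ∀ i j : Fin p, i ≠ j → t i - t j ∉ K)
    (htfull : ∀ g : G, ∃ i : Fin p, g - t i ∈ K)
    (mL : G → Matrix (Fin r) (Fin q) ℂ) :
    ∀ (f : G → Fin q → ℂ) (x : K) (ia : Fin p × Fin r),
      (∑ y : G, (mL y).mulVec (f ((x : G) + t ia.1 + y))) ia.2 =
      (∑ y : K,
        (Matrix.of fun (ja : Fin p × Fin r) (kb : Fin p × Fin q) =>
          mL ((y : G) - t ja.1 + t kb.1) ja.2 kb.2).mulVec
          (fun kb : Fin p × Fin q => f ((x : G) + (y : G) + t kb.1) kb.2)) ia := by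
  intro f x ia
  obtain ⟨i, a⟩ := ia
  have hφ : Function.Bijective (fun yk : K × Fin p => (yk.1 : G) + t yk.2 - t i) := by
    constructor
    · rintro ⟨y, k⟩ ⟨y', k'⟩ h
      simp only at h
      have hk : k = k' := by
        by_contra hne
        refine htdist k k' hne ?_
        have : (t k - t k' : G) = (y' : G) - (y : G) := by
          have h' : (y : G) + t k = (y' : G) + t k' := by
            have := sub_left_injective h
            simpa using this
          rw [sub_eq_sub_iff_add_eq_add, add_comm]
          exact h'
        rw [this]
        exact sub_mem y'.2 y.2
      subst hk
      have : (y : G) = (y' : G) := by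
        have h' : (y : G) + t k = (y' : G) + t k := by
          have := sub_left_injective h
          simpa using this
        exact add_right_cancel h'
      exact Prod.ext (Subtype.ext this) rfl
    · intro g
      obtain ⟨k, hk⟩ := htfull (g + t i)
      refine ⟨(⟨g + t i - t k, hk⟩, k), ?_⟩
      simp only
      abel
  have key := Fintype.sum_bijective _ hφ
      (fun yk : K × Fin p =>
        ∑ b, mL ((yk.1 : G) - t i + t yk.2) a b * f ((x : G) + (yk.1 : G) + t yk.2) b)
      (fun g => ∑ b, mL g a b * f ((x : G) + t i + g) b)
      (by
        rintro ⟨y, k⟩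
        simp only
        have e1 : ((y : G)) - t i + t k = (y : G) + t k - t i := by abel
        have e2 : ((x : G)) + (y : G) + t k = (x : G) + t i + ((y : G) + t k - t i) := by abel
        rw [e1, e2])
  simp only [Finset.sum_apply, Matrix.mulVec, dotProduct, Matrix.of_apply]
  rw [← key, Fintype.sum_prod_type]
  exact Finset.sum_congr rfl fun y _ =>
    (Fintype.sum_prod_type (fun kb : Fin p × Fin q =>
      mL ((y : G) - t i + t kb.1) a kb.2 * f ((x : G) + (y : G) + t kb.1) kb.2)).symm
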